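/- Let η : (X,d) → (X',d') be an (r,β)-Hölder equivalence and let F ⊆ X be a finite subset with at least two points and no focal points. Then η(F) has no focal points and, for every s ∈ [0,∞), H^s(η(F)) = r^s · H^{sβ}(F). -/
import Mathlib


open Metric

namespace FinDim

variable {X : Type*} [MetricSpace X]

/-- `ν_F(a)`: the distance from `a` to a nearest other point of `F`. -/
noncomputable def nu (F : Finset X) (a : X) : ℝ :=
  sInf {r : ℝ | ∃ x ∈ F, x ≠ a ∧ r = dist a x}

/-- `δ(F)`: the separation of `F`, the minimum distance between distinct points. -/
noncomputable def sep (F : Finset X) : ℝ :=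
  sInf {r : ℝ | ∃ x ∈ F, ∃ y ∈ F, x ≠ y ∧ r = dist x y}

/-- A 2-covering of `F`: a family of subsets of `F` covering `F`,
each member having at least two elements. -/
def IsTwoCover (F : Finset X) (U : Finset (Finset X)) : Prop :=
  (∀ V ∈ U, V ⊆ F) ∧ (∀ V ∈ U, 2 ≤ V.card) ∧ ∀ a ∈ F, ∃ V ∈ U, a ∈ V

/-- `Δ(𝒰)`: maximum diameter of the members of the family `𝒰`. -/
noncomputable def coverDiam (U : Finset (Finset X)) : ℝ :=
  sSup {r : ℝ | ∃ V ∈ U, r = Metric.diam (V : Set X)}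

/-- `∇(F)`: the covering diameter of `F`. -/
noncomputable def nablaF (F : Finset X) : ℝ :=
  sInf {r : ℝ | ∃ U : Finset (Finset X), IsTwoCover F U ∧ r = coverDiam U}

/-- `a` is a focal point of `F`. -/
def IsFocal (F : Finset X) (a : X) : Prop :=
  a ∈ F ∧ ∀ x ∈ F, x ≠ a → dist a x = Metric.diam (F : Set X)

/-- `H^s_𝒰(F) = Σ_{U ∈ 𝒰} Δ(U)^s`. -/
noncomputable def Hcov (U : Finset (Finset X)) (s : ℝ) : ℝ :=
  ∑ V ∈ U, Metric.diam (V : Set X) ^ s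

/-- `H^s(F)`: minimum of `H^s_𝒰(F)` over 2-coverings `𝒰` with `Δ(𝒰) = ∇(F)`. -/
noncomputable def HH (F : Finset X) (s : ℝ) : ℝ :=
  sInf {h : ℝ | ∃ U : Finset (Finset X),
    IsTwoCover F U ∧ coverDiam U = nablaF F ∧ h = Hcov U s}

/-- The finite Hausdorff dimension: the unique `s₀ ∈ (0,∞)` with
`H^{s₀}(F) = Δ(F)^{s₀}` (when `F` has no focal points). -/
noncomputable def dimfH (F : Finset X) : ℝ :=
  sInf {s : ℝ | 0 < s ∧ HH F s = Metric.diam (F : Set X) ^ s}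

/-- `T_{∇(F)}(F)`: the minimal cardinality of a 2-covering `𝒰` with `Δ(𝒰) = ∇(F)`. -/
noncomputable def Tmin (F : Finset X) : ℕ :=
  sInf {n : ℕ | ∃ U : Finset (Finset X),
    IsTwoCover F U ∧ coverDiam U = nablaF F ∧ U.card = n}

/-- The finite box dimension `dim_fB(F) = ln T_{∇(F)}(F) / ln (Δ(F)/∇(F))`. -/
noncomputable def dimfB (F : Finset X) : ℝ :=
  Real.log (Tmin F) / Real.log (Metric.diam (F : Set X) / nablaF F)

/-- `ν_A(x)` for a subset `A` of a metric space. -/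
noncomputable def nuSet {Z : Type*} [MetricSpace Z] (A : Set Z) (x : Z) : ℝ :=
  sInf {r : ℝ | ∃ y ∈ A, y ≠ x ∧ r = dist x y}

/-- `∇(A) = sup {ν_A(x) : x ∈ A}` for a subset `A` of a metric space. -/
noncomputable def nablaSet {Z : Type*} [MetricSpace Z] (A : Set Z) : ℝ :=
  sSup {r : ℝ | ∃ x ∈ A, r = nuSet A x}

end FinDim

section Aux
open FinDim Pointwise

set_option linter.unusedSectionVars false

variable {X X' : Type*} [MetricSpace X] [MetricSpace X']

/-- The diameter of a finite set is attained. -/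
lemma finset_exists_dist_eq_diam (V : Finset X) (h : V.Nonempty) :
    ∃ x ∈ V, ∃ y ∈ V, dist x y = Metric.diam (V : Set X) := by
  classical
  obtain ⟨a, ha⟩ := h
  have hD : ((V ×ˢ V).image (fun p => dist p.1 p.2)).Nonempty :=
    ⟨dist a a, Finset.mem_image.2 ⟨(a,a), Finset.mem_product.2 ⟨ha, ha⟩, rfl⟩⟩
  set D := (V ×ˢ V).image (fun p => dist p.1 p.2)
  obtain ⟨p, hp, hpmax⟩ := Finset.mem_image.1 (D.max'_mem hD)
  obtain ⟨hp1, hp2⟩ := Finset.mem_product.1 hp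
  refine ⟨p.1, hp1, p.2, hp2, le_antisymm ?_ ?_⟩
  · exact Metric.dist_le_diam_of_mem (V.finite_toSet.isBounded) hp1 hp2
  · rw [hpmax]
    refine Metric.diam_le_of_forall_dist_le
      ((D.le_max' _ (Finset.mem_image.2 ⟨(a,a), Finset.mem_product.2 ⟨ha, ha⟩, rfl⟩)).trans'
        (by simp)) ?_
    intro x hx y hy
    exact D.le_max' _ (Finset.mem_image.2 ⟨(x,y), Finset.mem_product.2 ⟨hx, hy⟩, rfl⟩)

lemma csSup_image_monoOn {φ : ℝ → ℝ}
    (hmono : ∀ x y, 0 ≤ x → x ≤ y → φ x ≤ φ y)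
    {S : Set ℝ} (hfin : S.Finite) (hne : S.Nonempty) (hnn : ∀ x ∈ S, 0 ≤ x) :
    sSup (φ '' S) = φ (sSup S) := by
  have hSmem : sSup S ∈ S := hne.csSup_mem hfin
  obtain ⟨x, hx, hφx⟩ := (hne.image φ).csSup_mem (hfin.image φ)
  refine le_antisymm ?_ (le_csSup (hfin.image φ).bddAbove ⟨_, hSmem, rfl⟩)
  rw [← hφx]
  exact hmono x (sSup S) (hnn x hx) (le_csSup hfin.bddAbove hx)

lemma csInf_image_monoOn {φ : ℝ → ℝ}
    (hmono : ∀ x y, 0 ≤ x → x ≤ y → φ x ≤ φ y)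
    {S : Set ℝ} (hfin : S.Finite) (hne : S.Nonempty) (hnn : ∀ x ∈ S, 0 ≤ x) :
    sInf (φ '' S) = φ (sInf S) := by
  have hSmem : sInf S ∈ S := hne.csInf_mem hfin
  obtain ⟨x, hx, hφx⟩ := (hne.image φ).csInf_mem (hfin.image φ)
  refine le_antisymm (csInf_le (hfin.image φ).bddBelow ⟨_, hSmem, rfl⟩) ?_
  rw [← hφx]
  exact hmono (sInf S) x (hnn _ hSmem) (csInf_le hfin.bddBelow hx)

variable [DecidableEq X'] (η : X → X') (r β : ℝ)
  (hr : 0 < r) (hβ : 0 < β)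
  (hη : ∀ x y : X, dist (η x) (η y) = r * dist x y ^ β)

section
include hr hβ hη

lemma eta_inj : Function.Injective η := by
  intro x y hxy
  have h0 : r * dist x y ^ β = 0 := by rw [← hη]; simp [hxy]
  have h1 : dist x y ^ β = 0 := by
    rcases mul_eq_zero.1 h0 with h | h
    · exact absurd h hr.ne'
    · exact h
  have := (Real.rpow_eq_zero_iff_of_nonneg dist_nonneg).1 h1
  exact dist_eq_zero.1 this.1

lemma diam_image_eta (V : Finset X) :
    Metric.diam ((V.image η : Finset X') : Set X') = r * Metric.diam (V : Set X) ^ β := by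
  rcases V.eq_empty_or_nonempty with rfl | hne
  · simp [Real.zero_rpow hβ.ne']
  have hdnn : (0:ℝ) ≤ r * Metric.diam (V : Set X) ^ β :=
    mul_nonneg hr.le (Real.rpow_nonneg Metric.diam_nonneg _)
  refine le_antisymm (Metric.diam_le_of_forall_dist_le hdnn ?_) ?_
  · rintro p hp q hq
    simp only [Finset.coe_image, Set.mem_image, Finset.mem_coe] at hp hq
    obtain ⟨x, hx, rfl⟩ := hp
    obtain ⟨y, hy, rfl⟩ := hq
    rw [hη]
    refine mul_le_mul_of_nonneg_left ?_ hr.le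
    exact Real.rpow_le_rpow dist_nonneg
      (Metric.dist_le_diam_of_mem V.finite_toSet.isBounded hx hy) hβ.le
  · obtain ⟨x, hx, y, hy, hxy⟩ := finset_exists_dist_eq_diam V hne
    rw [← hxy, ← hη]
    exact Metric.dist_le_diam_of_mem (V.image η).finite_toSet.isBounded
      (Finset.mem_image_of_mem η hx) (Finset.mem_image_of_mem η hy)

lemma phi_mono : ∀ x y : ℝ, 0 ≤ x → x ≤ y → r * x ^ β ≤ r * y ^ β := fun x y hx hxy =>
  mul_le_mul_of_nonneg_left (Real.rpow_le_rpow hx hxy hβ.le) hr.le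

lemma twoCover_image {F : Finset X} {U : Finset (Finset X)} (h : IsTwoCover F U) :
    IsTwoCover (F.image η) (U.image (·.image η)) := by
  obtain ⟨h1, h2, h3⟩ := h
  refine ⟨?_, ?_, ?_⟩
  · rintro V' hV'
    obtain ⟨V, hV, rfl⟩ := Finset.mem_image.1 hV'
    exact Finset.image_subset_image (h1 V hV)
  · rintro V' hV'
    obtain ⟨V, hV, rfl⟩ := Finset.mem_image.1 hV'
    rw [Finset.card_image_of_injective V (eta_inj η r β hr hβ hη)]
    exact h2 V hV
  · rintro a' ha'
    obtain ⟨a, ha, rfl⟩ := Finset.mem_image.1 ha'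
    obtain ⟨V, hV, haV⟩ := h3 a ha
    exact ⟨V.image η, Finset.mem_image_of_mem _ hV, Finset.mem_image_of_mem η haV⟩

lemma coverDiam_image {U : Finset (Finset X)} (hU : U.Nonempty) :
    coverDiam (U.image (fun V : Finset X => V.image η)) = r * coverDiam U ^ β := by
  have hset : {d : ℝ | ∃ V' ∈ U.image (fun V : Finset X => V.image η), d = Metric.diam (V' : Set X')}
      = (fun t => r * t ^ β) '' {d : ℝ | ∃ V ∈ U, d = Metric.diam (V : Set X)} := by
    ext d
    constructor
    · rintro ⟨V', hV', rfl⟩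
      obtain ⟨V, hV, rfl⟩ := Finset.mem_image.1 hV'
      exact ⟨Metric.diam (V : Set X), ⟨V, hV, rfl⟩, (diam_image_eta η r β hr hβ hη V).symm⟩
    · rintro ⟨d₀, ⟨V, hV, rfl⟩, rfl⟩
      exact ⟨V.image η, Finset.mem_image_of_mem _ hV, (diam_image_eta η r β hr hβ hη V).symm⟩
  have hfin : {d : ℝ | ∃ V ∈ U, d = Metric.diam (V : Set X)}.Finite := by
    have hsub : {d : ℝ | ∃ V ∈ U, d = Metric.diam (V : Set X)}
        ⊆ (fun V : Finset X => Metric.diam (V : Set X)) '' ↑U := by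
      rintro d ⟨V, hV, rfl⟩; exact ⟨V, hV, rfl⟩
    exact (U.finite_toSet.image _).subset hsub
  obtain ⟨V₀, hV₀⟩ := hU
  have hne : {d : ℝ | ∃ V ∈ U, d = Metric.diam (V : Set X)}.Nonempty :=
    ⟨_, V₀, hV₀, rfl⟩
  rw [coverDiam, coverDiam, hset,
    csSup_image_monoOn (phi_mono η r β hr hβ hη) hfin hne
      (by rintro d ⟨V, hV, rfl⟩; exact Metric.diam_nonneg)]

lemma twoCover_pullback {F : Finset X} {U' : Finset (Finset X')}
    (h : IsTwoCover (F.image η) U') :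
    ∃ U : Finset (Finset X), IsTwoCover F U ∧ U.image (·.image η) = U' := by
  classical
  obtain ⟨h1, h2, h3⟩ := h
  set g : Finset X' → Finset X := fun V' => F.filter (fun x => η x ∈ V') with hg
  have hgim : ∀ V' ∈ U', (g V').image η = V' := by
    intro V' hV'
    apply Finset.Subset.antisymm
    · intro y hy
      obtain ⟨x, hx, rfl⟩ := Finset.mem_image.1 hy
      exact (Finset.mem_filter.1 hx).2
    · intro y hy
      obtain ⟨x, hx, rfl⟩ := Finset.mem_image.1 (h1 V' hV' hy)
      exact Finset.mem_image_of_mem η (Finset.mem_filter.2 ⟨hx, hy⟩)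
  refine ⟨U'.image g, ⟨?_, ?_, ?_⟩, ?_⟩
  · rintro V hV
    obtain ⟨V', hV', rfl⟩ := Finset.mem_image.1 hV
    exact Finset.filter_subset _ _
  · rintro V hV
    obtain ⟨V', hV', rfl⟩ := Finset.mem_image.1 hV
    have hc := h2 V' hV'
    rw [← hgim V' hV', Finset.card_image_of_injective _ (eta_inj η r β hr hβ hη)] at hc
    exact hc
  · intro a ha
    obtain ⟨V', hV', haV'⟩ := h3 (η a) (Finset.mem_image_of_mem η ha)
    exact ⟨g V', Finset.mem_image_of_mem g hV', Finset.mem_filter.2 ⟨ha, haV'⟩⟩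
  · rw [Finset.image_image]
    calc U'.image ((·.image η) ∘ g) = U'.image id := by
          apply Finset.image_congr
          intro V' hV'; exact hgim V' hV'
      _ = U' := Finset.image_id

lemma Hcov_image {U : Finset (Finset X)} (s : ℝ) (hs : 0 ≤ s) :
    Hcov (U.image (·.image η)) s = r ^ s * Hcov U (s * β) := by
  rw [Hcov, Hcov, Finset.sum_image
    (fun V _ W _ hVW => Finset.image_injective (eta_inj η r β hr hβ hη) hVW),
    Finset.mul_sum]
  refine Finset.sum_congr rfl fun V _ => ?_
  rw [diam_image_eta η r β hr hβ hη V,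
    Real.mul_rpow hr.le (Real.rpow_nonneg Metric.diam_nonneg _),
    ← Real.rpow_mul Metric.diam_nonneg, mul_comm β s]

end
lemma cover_nonempty {F : Finset X} {U : Finset (Finset X)} (hFne : F.Nonempty)
    (h : IsTwoCover F U) : U.Nonempty := by
  obtain ⟨a, ha⟩ := hFne
  obtain ⟨V, hV, -⟩ := h.2.2 a ha
  exact ⟨V, hV⟩

lemma coverDiam_nonneg {U : Finset (Finset X)} (hU : U.Nonempty) : 0 ≤ coverDiam U := by
  obtain ⟨V₀, hV₀⟩ := hU
  have hfin : {d : ℝ | ∃ V ∈ U, d = Metric.diam (V : Set X)}.Finite := by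
    have hsub : {d : ℝ | ∃ V ∈ U, d = Metric.diam (V : Set X)}
        ⊆ (fun V : Finset X => Metric.diam (V : Set X)) '' ↑U := by
      rintro d ⟨V, hV, rfl⟩; exact ⟨V, hV, rfl⟩
    exact (U.finite_toSet.image _).subset hsub
  exact Metric.diam_nonneg.trans (le_csSup hfin.bddAbove ⟨V₀, hV₀, rfl⟩)

lemma Sset_finite (F : Finset X) :
    {d : ℝ | ∃ U : Finset (Finset X), IsTwoCover F U ∧ d = coverDiam U}.Finite := by
  classical
  have hsub : {d : ℝ | ∃ U : Finset (Finset X), IsTwoCover F U ∧ d = coverDiam U}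
      ⊆ (fun U : Finset (Finset X) => coverDiam U) '' ↑F.powerset.powerset := by
    rintro d ⟨U, hU, rfl⟩
    refine ⟨U, ?_, rfl⟩
    simp only [Finset.coe_powerset, Set.mem_preimage, Set.mem_powerset_iff,
      Finset.coe_subset, Finset.mem_coe]
    intro V hV
    simpa using hU.1 V hV
  exact ((F.powerset.powerset.finite_toSet).image _).subset hsub

lemma Sset_nonempty {F : Finset X} (hF : 2 ≤ F.card) :
    {d : ℝ | ∃ U : Finset (Finset X), IsTwoCover F U ∧ d = coverDiam U}.Nonempty := by
  refine ⟨coverDiam {F}, {F}, ⟨?_, ?_, ?_⟩, rfl⟩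
  · intro V hV; rw [Finset.mem_singleton.1 hV]
  · intro V hV; rw [Finset.mem_singleton.1 hV]; exact hF
  · intro a ha; exact ⟨F, Finset.mem_singleton_self F, ha⟩

lemma Sset_nonneg {F : Finset X} (hF : 2 ≤ F.card) :
    ∀ d ∈ {d : ℝ | ∃ U : Finset (Finset X), IsTwoCover F U ∧ d = coverDiam U}, 0 ≤ d := by
  rintro d ⟨U, hU, rfl⟩
  exact coverDiam_nonneg (cover_nonempty (Finset.card_pos.1 (by omega)) hU)

section
include hr hβ hη

lemma Sset_eq {F : Finset X} (hF : 2 ≤ F.card) :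
    {d : ℝ | ∃ U' : Finset (Finset X'), IsTwoCover (F.image η) U' ∧ d = coverDiam U'}
    = (fun t => r * t ^ β) ''
      {d : ℝ | ∃ U : Finset (Finset X), IsTwoCover F U ∧ d = coverDiam U} := by
  have hFne : F.Nonempty := Finset.card_pos.1 (by omega)
  ext d
  constructor
  · rintro ⟨U', hU', rfl⟩
    obtain ⟨U, hU, rfl⟩ := twoCover_pullback η r β hr hβ hη hU'
    exact ⟨coverDiam U, ⟨U, hU, rfl⟩,
      (coverDiam_image η r β hr hβ hη (cover_nonempty hFne hU)).symm⟩
  · rintro ⟨d₀, ⟨U, hU, rfl⟩, rfl⟩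
    exact ⟨U.image (fun V : Finset X => V.image η), twoCover_image η r β hr hβ hη hU,
      (coverDiam_image η r β hr hβ hη (cover_nonempty hFne hU)).symm⟩

lemma nablaF_image {F : Finset X} (hF : 2 ≤ F.card) :
    nablaF (F.image η) = r * nablaF F ^ β := by
  rw [nablaF, nablaF, Sset_eq η r β hr hβ hη hF,
    csInf_image_monoOn (phi_mono η r β hr hβ hη) (Sset_finite F) (Sset_nonempty hF)
      (Sset_nonneg hF)]

lemma nablaF_attained {F : Finset X} (hF : 2 ≤ F.card) :
    ∃ U : Finset (Finset X), IsTwoCover F U ∧ coverDiam U = nablaF F := by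
  have := (Sset_nonempty (F := F) hF).csInf_mem (Sset_finite F)
  obtain ⟨U, hU, hd⟩ := this
  exact ⟨U, hU, hd.symm⟩

lemma nablaF_nonneg {F : Finset X} (hF : 2 ≤ F.card) : 0 ≤ nablaF F := by
  obtain ⟨U, hU, hd⟩ := nablaF_attained η r β hr hβ hη (F := F) hF
  rw [← hd]
  exact coverDiam_nonneg (cover_nonempty (Finset.card_pos.1 (by omega)) hU)

lemma phi_injOn : ∀ x y : ℝ, 0 ≤ x → 0 ≤ y → r * x ^ β = r * y ^ β → x = y := by
  intro x y hx hy hxy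
  exact Real.rpow_left_injOn hβ.ne' hx hy (mul_left_cancel₀ hr.ne' hxy)

lemma Tset_eq {F : Finset X} (hF : 2 ≤ F.card) (s : ℝ) (hs : 0 ≤ s) :
    {h : ℝ | ∃ U' : Finset (Finset X'), IsTwoCover (F.image η) U' ∧
      coverDiam U' = nablaF (F.image η) ∧ h = Hcov U' s}
    = (fun h => r ^ s * h) '' {h : ℝ | ∃ U : Finset (Finset X), IsTwoCover F U ∧
      coverDiam U = nablaF F ∧ h = Hcov U (s * β)} := by
  have hFne : F.Nonempty := Finset.card_pos.1 (by omega)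
  ext h
  constructor
  · rintro ⟨U', hU', hd', rfl⟩
    obtain ⟨U, hU, rfl⟩ := twoCover_pullback η r β hr hβ hη hU'
    have hUne : U.Nonempty := cover_nonempty hFne hU
    rw [coverDiam_image η r β hr hβ hη hUne, nablaF_image η r β hr hβ hη hF] at hd'
    have hd : coverDiam U = nablaF F :=
      phi_injOn η r β hr hβ hη _ _ (coverDiam_nonneg hUne)
        (nablaF_nonneg η r β hr hβ hη hF) hd'
    exact ⟨Hcov U (s * β), ⟨U, hU, hd, rfl⟩,
      (Hcov_image η r β hr hβ hη s hs).symm⟩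
  · rintro ⟨h₀, ⟨U, hU, hd, rfl⟩, rfl⟩
    have hUne : U.Nonempty := cover_nonempty hFne hU
    refine ⟨U.image (fun V : Finset X => V.image η), twoCover_image η r β hr hβ hη hU,
      ?_, (Hcov_image η r β hr hβ hη s hs).symm⟩
    rw [coverDiam_image η r β hr hβ hη hUne, nablaF_image η r β hr hβ hη hF, hd]

end

end Aux

open FinDim in
/-- Behaviour of `H^s` under an `(r,β)`-Hölder equivalence. -/
theorem stmt2 {X X' : Type*} [MetricSpace X] [MetricSpace X'] [DecidableEq X'] (η : X → X') (r β : ℝ)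
    (hr : 0 < r) (hβ : 0 < β)
    (hη : ∀ x y : X, dist (η x) (η y) = r * dist x y ^ β)
    (F : Finset X) (hF : 2 ≤ F.card) (hfoc : ∀ a, ¬ IsFocal F a) :
    (∀ a, ¬ IsFocal (F.image η) a) ∧
    ∀ s : ℝ, 0 ≤ s → HH (F.image η) s = r ^ s * HH F (s * β) := by
  classical
  have hFne : F.Nonempty := Finset.card_pos.1 (by omega)
  constructor
  · rintro a' ⟨ha', hfa⟩
    obtain ⟨a, ha, rfl⟩ := Finset.mem_image.1 ha'
    apply hfoc a
    refine ⟨ha, fun x hx hxa => ?_⟩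
    have h1 : dist (η a) (η x) = Metric.diam ((F.image η : Finset X') : Set X') :=
      hfa (η x) (Finset.mem_image_of_mem η hx)
        (fun h => hxa (eta_inj η r β hr hβ hη h))
    rw [hη, diam_image_eta η r β hr hβ hη F] at h1
    exact phi_injOn η r β hr hβ hη _ _ dist_nonneg Metric.diam_nonneg h1
  · intro s hs
    unfold HH
    rw [Tset_eq η r β hr hβ hη hF s hs]
    have hfun : (fun h : ℝ => r ^ s * h) = (fun h : ℝ => r ^ s • h) := by
      funext h; rw [smul_eq_mul]
    rw [hfun, Set.image_smul, Real.sInf_smul_of_nonneg (Real.rpow_nonneg hr.le s),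
      smul_eq_mul]
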